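/- arXiv:0910.3898 — 3 statements merged into one kernel-verified Lean document; each statement's English description precedes it below -/
import Mathlib

section
/- Let K be a number field and let D be a divisor on K. Then the set H⁰(D) is finite. -/
open NumberField IsDedekindDomain Ideal

open scoped Multiplicative

open scoped nonZeroDivisors

/-- In a Dedekind domain, if the `v`-adic valuation of `a` is at most that of `b ≠ 0` for
every height one prime `v`, then `b` divides `a`. -/
lemma dvd_of_intVal_le {R : Type*} [CommRing R] [IsDedekindDomain R] {a b : R} (hb : b ≠ 0)
    (h : ∀ v : HeightOneSpectrum R, v.intValuationDef a ≤ v.intValuationDef b) : b ∣ a := by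
  classical
  rcases eq_or_ne a 0 with rfl | ha
  · exact dvd_zero b
  have hspanb : Ideal.span {b} ≠ (0 : Ideal R) := by
    simpa [Ideal.zero_eq_bot, Ideal.span_singleton_eq_bot] using hb
  have key : ∀ v : HeightOneSpectrum R,
      v.maxPowDividing (Ideal.span {b}) ∣ Ideal.span {a} := by
    intro v
    rw [IsDedekindDomain.HeightOneSpectrum.maxPowDividing, ← v.intValuation_le_pow_iff_dvd]
    calc v.intValuationDef a ≤ v.intValuationDef b := h v
      _ ≤ _ := by rw [v.intValuationDef_if_neg hb]
  have hfin := Ideal.finite_mulSupport (R := R) hspanb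
  have hprod : ∏ v ∈ hfin.toFinset,
      v.maxPowDividing (Ideal.span {b}) = Ideal.span {b} := by
    rw [← finprod_eq_prod _ hfin]
    exact Ideal.finprod_heightOneSpectrum_factorization hspanb
  have hdvd : Ideal.span {b} ∣ Ideal.span {a} := by
    rw [← hprod]
    refine Finset.prod_dvd_of_coprime ?_ (fun v _ => key v)
    intro v _ w _ hvw
    refine IsCoprime.pow ?_
    rw [Ideal.isCoprime_iff_sup_eq]
    exact Ideal.IsMaximal.coprime_of_ne v.isMaximal w.isMaximal
      (fun hh => hvw (IsDedekindDomain.HeightOneSpectrum.ext hh))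
  rw [← Ideal.span_singleton_le_span_singleton]
  exact Ideal.le_of_dvd hdvd

/-- An element of the fraction field of a Dedekind domain all of whose valuations are at most
one lies in the image of the ring. -/
lemma mem_range_of_valuation_le_one {R : Type*} [CommRing R] [IsDedekindDomain R]
    {K : Type*} [Field K] [Algebra R K] [IsFractionRing R K] {x : K}
    (h : ∀ v : HeightOneSpectrum R, v.valuation K x ≤ 1) :
    ∃ y : R, algebraMap R K y = x := by
  obtain ⟨a, b, hb, rfl⟩ := IsFractionRing.div_surjective (A := R) x
  have hb0 : b ≠ 0 := nonZeroDivisors.ne_zero hb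
  have hbK : algebraMap R K b ≠ 0 := by
    simpa using (map_ne_zero_of_mem_nonZeroDivisors _ (IsFractionRing.injective R K) hb)
  have hint : ∀ v : HeightOneSpectrum R, v.intValuationDef a ≤ v.intValuationDef b := by
    intro v
    have h1 : v.valuation K (algebraMap R K a) =
        v.valuation K (algebraMap R K a / algebraMap R K b) * v.valuation K (algebraMap R K b) := by
      rw [← Valuation.map_mul, div_mul_cancel₀ _ hbK]
    have h2 : v.valuation K (algebraMap R K a) ≤ v.valuation K (algebraMap R K b) := by
      rw [h1]
      calc v.valuation K (algebraMap R K a / algebraMap R K b) * v.valuation K (algebraMap R K b)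
          ≤ 1 * v.valuation K (algebraMap R K b) := mul_le_mul_left (h v) _
        _ = v.valuation K (algebraMap R K b) := one_mul _
    rwa [v.valuation_of_algebraMap, v.valuation_of_algebraMap,
      IsDedekindDomain.HeightOneSpectrum.intValuation_apply,
      IsDedekindDomain.HeightOneSpectrum.intValuation_apply] at h2
  obtain ⟨c, rfl⟩ := dvd_of_intVal_le hb0 hint
  exact ⟨c, by rw [_root_.map_mul, mul_comm, mul_div_assoc, div_self hbK, mul_one]⟩


variable (K : Type*) [Field K] [NumberField K]

/-- A divisor on a number field: a finitely supported integer coefficient at each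
nonzero prime ideal of the ring of integers, and a real coefficient at each infinite place. -/
structure Divisor where
  a : HeightOneSpectrum (𝓞 K) → ℤ
  r : InfinitePlace K → ℝ
  fin : (Function.support a).Finite

variable {K}

/-- The (multiplicative) degree of a divisor:
`deg D = ∏_P N(P)^(a_P) * ∏_w exp (m_w * r_w)`. -/
noncomputable def Divisor.deg (D : Divisor K) : ℝ :=
  (∏ᶠ P : HeightOneSpectrum (𝓞 K), (absNorm P.asIdeal : ℝ) ^ (D.a P)) *
    ∏ w : InfinitePlace K, Real.exp (w.mult * D.r w)

open scoped Classical in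
/-- The normalized P-adic absolute value `|α|_P = N(P)^(-v_P α)`. -/
noncomputable def padicAbs (P : HeightOneSpectrum (𝓞 K)) (α : K) : ℝ :=
  if hα : α = 0 then 0
  else (absNorm P.asIdeal : ℝ) ^
    (Multiplicative.toAdd (WithZero.unzero ((P.valuation K).ne_zero_iff.mpr hα)))

/-- The set of multiples of a divisor:
`H⁰(D) = {α : |α|_P ≤ N(P)^(a_P) for all P, and w(α)^(m_w) ≤ exp (m_w * r_w) for all w}`. -/
def H0 (D : Divisor K) : Set K :=
  {α | (∀ P : HeightOneSpectrum (𝓞 K), padicAbs P α ≤ (absNorm P.asIdeal : ℝ) ^ (D.a P)) ∧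
    ∀ w : InfinitePlace K, (w α) ^ w.mult ≤ Real.exp (w.mult * D.r w)}

/-- `h⁰(D)` is the cardinality of `H⁰(D)`. -/
noncomputable def h0 (D : Divisor K) : ℕ := Nat.card (H0 D)

/-- Coefficientwise difference of divisors. -/
noncomputable def Divisor.sub (D E : Divisor K) : Divisor K :=
  ⟨D.a - E.a, D.r - E.r, ((D.fin.union E.fin).subset (Function.support_sub D.a E.a))⟩

variable (K)

/-- `S₁(K)` is the number of real places of `K`. -/
noncomputable def S1 : ℕ := InfinitePlace.nrRealPlaces K

/-- `S₂(K)` is twice the number of complex places of `K`. -/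
noncomputable def S2 : ℕ := 2 * InfinitePlace.nrComplexPlaces K

/-- The set of multiples `H⁰(D)` of a divisor `D` on a number field is finite. -/
theorem H0_finite (D : Divisor K) : (H0 D).Finite := by
  classical
  set T := D.fin.toFinset with hT
  set Nn : ℕ := ∏ P ∈ T, absNorm P.asIdeal ^ (D.a P).toNat with hNn
  have hNP0 : ∀ P : HeightOneSpectrum (𝓞 K), absNorm P.asIdeal ≠ 0 := fun P hzero =>
    P.ne_bot (by rwa [absNorm_eq_zero_iff] at hzero)
  have hNn0 : Nn ≠ 0 := Finset.prod_ne_zero_iff.mpr fun P _ => pow_ne_zero _ (hNP0 P)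
  have hdvdN : ∀ P : HeightOneSpectrum (𝓞 K), absNorm P.asIdeal ^ (D.a P).toNat ∣ Nn := by
    intro P
    by_cases hP : P ∈ T
    · exact Finset.dvd_prod_of_mem _ hP
    · have h0 : D.a P = 0 := by
        by_contra h
        exact hP (D.fin.mem_toFinset.mpr h)
      simp [h0]
  have hvalN : ∀ P : HeightOneSpectrum (𝓞 K),
      P.valuation K ((Nn : K)) ≤ ((Multiplicative.ofAdd (-((D.a P).toNat : ℤ)) : Multiplicative ℤ) : WithZero (Multiplicative ℤ)) := by
    intro P
    obtain ⟨m, hm⟩ := hdvdN P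
    have hcast : ((Nn : 𝓞 K)) = (absNorm P.asIdeal : 𝓞 K) ^ (D.a P).toNat * (m : 𝓞 K) := by
      exact_mod_cast congrArg (Nat.cast : ℕ → 𝓞 K) hm
    have hmem : ((Nn : ℕ) : 𝓞 K) ∈ P.asIdeal ^ (D.a P).toNat := by
      rw [hcast]
      exact Ideal.mul_mem_right _ _
        (Ideal.pow_mem_pow (by exact_mod_cast absNorm_mem P.asIdeal) _)
    have hd : P.asIdeal ^ (D.a P).toNat ∣ Ideal.span {((Nn : ℕ) : 𝓞 K)} := by
      rwa [Ideal.dvd_span_singleton]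
    have hiv := (P.intValuation_le_pow_iff_dvd ((Nn : ℕ) : 𝓞 K) (D.a P).toNat).mpr hd
    have hK : ((Nn : K)) = algebraMap (𝓞 K) K ((Nn : 𝓞 K)) := (map_natCast _ Nn).symm
    rw [hK, P.valuation_of_algebraMap, IsDedekindDomain.HeightOneSpectrum.intValuation_apply]
    exact hiv
  have hval : ∀ α ∈ H0 D, ∀ P : HeightOneSpectrum (𝓞 K), P.valuation K ((Nn : K) * α) ≤ 1 := by
    intro α hα P
    rcases eq_or_ne α 0 with rfl | hα0
    · simp
    have h1 := hα.1 P
    have hNgt1 : (1 : ℝ) < (absNorm P.asIdeal : ℝ) := by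
      have h2 : 2 ≤ absNorm P.asIdeal := (Nat.two_le_iff _).mpr
        ⟨hNP0 P, fun h1 => P.isPrime.ne_top (absNorm_eq_one_iff.mp h1)⟩
      exact_mod_cast lt_of_lt_of_le one_lt_two (by exact_mod_cast h2)
    rw [padicAbs, dif_neg hα0] at h1
    have hle : Multiplicative.toAdd (WithZero.unzero ((P.valuation K).ne_zero_iff.mpr hα0)) ≤ D.a P :=
      (zpow_le_zpow_iff_right₀ hNgt1).mp h1
    have hvα : P.valuation K α ≤ ((Multiplicative.ofAdd (D.a P) : Multiplicative ℤ) : WithZero (Multiplicative ℤ)) := by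
      rw [← WithZero.coe_unzero ((P.valuation K).ne_zero_iff.mpr hα0), WithZero.coe_le_coe]
      rwa [← Multiplicative.toAdd_le, toAdd_ofAdd]
    calc P.valuation K ((Nn : K) * α) = P.valuation K (Nn : K) * P.valuation K α := map_mul _ _ _
      _ ≤ ((Multiplicative.ofAdd (-((D.a P).toNat : ℤ)) : Multiplicative ℤ) : WithZero (Multiplicative ℤ)) *
          ((Multiplicative.ofAdd (D.a P) : Multiplicative ℤ) : WithZero (Multiplicative ℤ)) := mul_le_mul' (hvalN P) hvα
      _ ≤ 1 := by
          rw [← WithZero.coe_mul, ← ofAdd_add, ← WithZero.coe_one, WithZero.coe_le_coe,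
            ← ofAdd_zero, Multiplicative.ofAdd_le]
          linarith [Int.self_le_toNat (D.a P)]
  set B : ℝ := (Nn : ℝ) * ∑ w : InfinitePlace K, Real.exp (D.r w) with hB
  have hbound : ∀ α ∈ H0 D, ∀ φ : K →+* ℂ, ‖φ ((Nn : K) * α)‖ ≤ B := by
    intro α hα φ
    have h2 := hα.2 (InfinitePlace.mk φ)
    have hwα : (InfinitePlace.mk φ) α ≤ Real.exp (D.r (InfinitePlace.mk φ)) := by
      refine le_of_pow_le_pow_left₀ (InfinitePlace.mult_ne_zero (w := InfinitePlace.mk φ)) (Real.exp_pos _).le ?_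
      rwa [← Real.exp_nat_mul]
    have hnorm : ‖φ ((Nn : K) * α)‖ = (Nn : ℝ) * (InfinitePlace.mk φ) α := by
      rw [_root_.map_mul, norm_mul, map_natCast, Complex.norm_natCast,
        InfinitePlace.apply]
    rw [hnorm, hB]
    refine mul_le_mul_of_nonneg_left ?_ (Nat.cast_nonneg _)
    exact le_trans hwα (Finset.single_le_sum (f := fun w => Real.exp (D.r w))
      (fun _ _ => (Real.exp_pos _).le) (Finset.mem_univ _))
  have hS := NumberField.Embeddings.finite_of_norm_le K ℂ B
  have hNnK : ((Nn : K)) ≠ 0 := Nat.cast_ne_zero.mpr hNn0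
  have hinj : Function.Injective (fun α : K => (Nn : K) * α) :=
    fun x y h => mul_left_cancel₀ hNnK h
  refine Set.Finite.subset (hS.preimage hinj.injOn) ?_
  intro α hα
  simp only [Set.mem_preimage, Set.mem_setOf_eq]
  refine ⟨?_, fun φ => hbound α hα φ⟩
  obtain ⟨y, hy⟩ := mem_range_of_valuation_le_one (hval α hα)
  rw [← hy]
  exact y.isIntegral_coe
end

section
/- Let K be a number field with ring of integers 𝓞_K. Then ∏_P N(P)^{r_P} = |disc_K|, where the product runs over the nonzero prime ideals P of 𝓞_K, r_P is the exponent of P in the different ideal of 𝓞_K over ℤ, and N(P) is the absolute norm of P. Equivalently, the absolute norm of the different ideal of 𝓞_K over ℤ equals the absolute value of the discriminant of K. -/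
open NumberField IsDedekindDomain Ideal

open scoped Classical in
/-- The exponent of the nonzero prime ideal `P` in the factorization of the ideal `I`. -/
noncomputable def primeExponent {R : Type*} [CommRing R] [IsDedekindDomain R]
    (P : HeightOneSpectrum R) (I : Ideal R) : ℕ :=
  (UniqueFactorizationMonoid.normalizedFactors I).count P.asIdeal

open FractionalIdeal nonZeroDivisors in
private theorem absNorm_diff (K : Type*) [Field K] [NumberField K] :
    absNorm (differentIdeal ℤ (𝓞 K)) = (discr K).natAbs := by
  classical
  have hloc : IsLocalization (Algebra.algebraMapSubmonoid (𝓞 K) ℤ⁰) K :=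
    IsIntegralClosure.isLocalization ℤ ℚ K (𝓞 K)
  let b := RingOfIntegers.basis K
  let b₀ := integralBasis K
  have hB := traceForm_nondegenerate ℚ K
  let bd := (Algebra.traceForm ℚ K).dualBasis hB b₀
  set D : FractionalIdeal (𝓞 K)⁰ K := FractionalIdeal.dual ℤ ℚ 1 with hDdef
  have hD0 : D ≠ 0 := FractionalIdeal.dual_ne_zero _ _ one_ne_zero
  have h1 : ((1 : Submodule (𝓞 K) K).restrictScalars ℤ)
      = Submodule.span ℤ (Set.range b₀) := by
    have hcomp : ⇑((Algebra.linearMap (𝓞 K) K).restrictScalars ℤ) ∘ ⇑b = ⇑b₀ :=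
      funext fun i => (integralBasis_apply K i).symm
    have : Submodule.span ℤ (Set.range ⇑b₀)
        = Submodule.map ((Algebra.linearMap (𝓞 K) K).restrictScalars ℤ) ⊤ := by
      rw [← b.span_eq, Submodule.map_span, ← Set.range_comp, hcomp]
    rw [this, Submodule.map_top]
    ext x
    simp only [Submodule.restrictScalars_mem, Submodule.mem_one, LinearMap.mem_range,
      LinearMap.coe_restrictScalars, Algebra.linearMap_apply]
  have hEq : Submodule.span ℤ (Set.range ⇑bd) = ((D : Submodule (𝓞 K) K).restrictScalars ℤ) := by
    rw [hDdef, coe_dual_one]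
    ext x
    rw [show ((Submodule.traceDual ℤ ℚ 1).restrictScalars ℤ : Submodule ℤ K)
      = (Algebra.traceForm ℚ K).dualSubmodule ((1 : Submodule (𝓞 K) K).restrictScalars ℤ) from rfl,
      h1, (Algebra.traceForm ℚ K).dualSubmodule_span_of_basis hB b₀]
  let bD : Module.Basis (Module.Free.ChooseBasisIndex ℤ (𝓞 K)) ℤ D :=
    (bd.restrictScalars ℤ).map (LinearEquiv.ofEq _ _ hEq)
  have habs : |(b.localizationLocalization ℚ ℤ⁰ K).det ((↑) ∘ bD)| = FractionalIdeal.absNorm D :=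
    abs_det_basis_change b D bD
  have hcoe : ((↑) ∘ bD : _ → K) = ⇑bd := by
    funext i
    exact Module.Basis.restrictScalars_apply (b := bd) (R := ℤ) i
  have hbb : b.localizationLocalization ℚ ℤ⁰ K = b₀ := rfl
  rw [hcoe, hbb] at habs
  -- compute the determinant
  have hdet : b₀.det ⇑bd * (discr K : ℚ) = 1 := by
    have h2 : bd.toMatrix ⇑b₀ = Matrix.transpose (Algebra.traceMatrix ℚ ⇑b₀) := by
      ext i j
      rw [Module.Basis.toMatrix_apply, LinearMap.BilinForm.dualBasis_repr_apply, Matrix.transpose_apply,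
        Algebra.traceMatrix_apply]
    have h3 := congrArg Matrix.det (b₀.toMatrix_mul_toMatrix_flip bd)
    rw [Matrix.det_mul, Matrix.det_one, h2, Matrix.det_transpose, ← Algebra.discr_def] at h3
    rw [Module.Basis.det_apply, show (discr K : ℚ) = Algebra.discr ℚ ⇑b₀ from coe_discr K]
    exact h3
  have hdisc0 : (discr K : ℚ) ≠ 0 := by
    exact_mod_cast (discr_ne_zero K)
  have hDval : FractionalIdeal.absNorm D = |(discr K : ℚ)|⁻¹ := by
    rw [← habs, Module.Basis.det_apply, ← abs_inv]
    congr 1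
    rw [← Module.Basis.det_apply]
    field_simp at hdet ⊢
    linarith [hdet]
  -- conclude
  have hmul : FractionalIdeal.absNorm D * FractionalIdeal.absNorm D⁻¹ = 1 := by
    rw [← _root_.map_mul, mul_inv_cancel₀ hD0, FractionalIdeal.absNorm_one]
  have hinv : FractionalIdeal.absNorm D⁻¹ = |(discr K : ℚ)| := by
    have h4 : FractionalIdeal.absNorm D⁻¹ = (FractionalIdeal.absNorm D)⁻¹ :=
      eq_inv_of_mul_eq_one_left (by rw [mul_comm]; exact hmul)
    rw [h4, hDval, inv_inv]
  have hfinal : (absNorm (differentIdeal ℤ (𝓞 K)) : ℚ) = ((discr K).natAbs : ℚ) := by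
    rw [← FractionalIdeal.coeIdeal_absNorm (K := K) (differentIdeal ℤ (𝓞 K)),
      coeIdeal_differentIdeal (A := ℤ) (K := ℚ) (L := K) (B := 𝓞 K), hinv,
      Nat.cast_natAbs, Int.cast_abs]
  exact_mod_cast hfinal

/-- For a number field `K`, `∏_P N(P)^(r_P) = |disc K|`, where `r_P` is the exponent of the
nonzero prime ideal `P` in the different ideal of `𝓞 K` over `ℤ`; equivalently, the absolute
norm of the different ideal of `𝓞 K` over `ℤ` equals the absolute value of the discriminant. -/
theorem absNorm_differentIdeal (K : Type*) [Field K] [NumberField K] :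
    (∏ᶠ P : HeightOneSpectrum (𝓞 K),
        (absNorm P.asIdeal) ^ (primeExponent P (differentIdeal ℤ (𝓞 K)))) =
      (discr K).natAbs ∧
    absNorm (differentIdeal ℤ (𝓞 K)) = (discr K).natAbs := by
  classical
  have h2 := absNorm_diff K
  refine ⟨?_, h2⟩
  set I := differentIdeal ℤ (𝓞 K) with hIdef
  have hI : I ≠ 0 := by
    intro h
    rw [h, Ideal.zero_eq_bot, Ideal.absNorm_bot] at h2
    exact (Int.natAbs_ne_zero.mpr (discr_ne_zero K)) h2.symm
  have hexp : ∀ P : HeightOneSpectrum (𝓞 K),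
      (Associates.mk P.asIdeal).count (Associates.mk I).factors = primeExponent P I :=
    fun P => Ideal.count_associates_factors_eq hI P.isPrime P.ne_bot
  let f : Ideal (𝓞 K) →* ℕ :=
    { toFun := absNorm, map_one' := _root_.map_one absNorm, map_mul' := _root_.map_mul absNorm }
  calc (∏ᶠ P : HeightOneSpectrum (𝓞 K), absNorm P.asIdeal ^ primeExponent P I)
      = ∏ᶠ P : HeightOneSpectrum (𝓞 K), f (P.maxPowDividing I) := by
        refine finprod_congr fun P => ?_
        show _ = absNorm (P.maxPowDividing I)
        rw [IsDedekindDomain.HeightOneSpectrum.maxPowDividing, _root_.map_pow, hexp]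
    _ = f (∏ᶠ P : HeightOneSpectrum (𝓞 K), P.maxPowDividing I) := by
        refine (MonoidHom.map_finprod_plift f _ ?_).symm
        rw [Function.HasFiniteMulSupport, Function.mulSupport_comp_eq_preimage]
        exact Set.Finite.preimage PLift.down_injective.injOn (Ideal.finite_mulSupport hI)
    _ = (discr K).natAbs := by
        show absNorm _ = _
        rw [Ideal.finprod_heightOneSpectrum_factorization hI]
        exact h2
end

section
/- Let K be a number field and let α ∈ K be nonzero. Then ∏_P |α|_P · ∏_w w(α)^{m_w} = 1, where the first product runs over the nonzero prime ideals P of 𝓞_K with |α|_P = N(P)^{-v_P(α)} the normalized P-adic absolute value, and the second product runs over the infinite places w of K, with m_w = 1 or 2 according as w is real or complex. -/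
open NumberField IsDedekindDomain Ideal

variable (K : Type*) [Field K] [NumberField K]

variable {K}

variable (K)

open scoped nonZeroDivisors Multiplicative

variable {K}

open scoped Classical in
noncomputable def cnt (P : HeightOneSpectrum (𝓞 K)) (x : 𝓞 K) : ℕ :=
  (Associates.mk P.asIdeal).count (Associates.mk (Ideal.span {x})).factors

lemma normPos (P : HeightOneSpectrum (𝓞 K)) : (0 : ℝ) < (absNorm P.asIdeal : ℝ) := by
  have : absNorm P.asIdeal ≠ 0 := by
    rw [Ne, Ideal.absNorm_eq_zero_iff]
    exact P.ne_bot
  exact_mod_cast Nat.pos_of_ne_zero this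

lemma toAdd_unzero_eq {u : Multiplicative ℤ} {z : WithZero (Multiplicative ℤ)} (h : z ≠ 0) (hz : z = (u : WithZero (Multiplicative ℤ))) :
    Multiplicative.toAdd (WithZero.unzero h) = Multiplicative.toAdd u := by
  subst hz
  rw [WithZero.unzero_coe]

lemma padicAbs_mk (P : HeightOneSpectrum (𝓞 K)) (x : 𝓞 K) (y : (𝓞 K)⁰) (hx : x ≠ 0) :
    padicAbs P (IsLocalization.mk' K x y) =
      (absNorm P.asIdeal : ℝ) ^ ((cnt P (y : 𝓞 K) : ℤ) - (cnt P x : ℤ)) := by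
  have hα : IsLocalization.mk' K x y ≠ 0 := fun h =>
    hx (IsFractionRing.mk'_eq_zero_iff_eq_zero.mp h)
  have hval : P.valuation K (IsLocalization.mk' K x y) =
      ((Multiplicative.ofAdd ((cnt P (y : 𝓞 K) : ℤ) - (cnt P x : ℤ)) : Multiplicative ℤ) :
        WithZero (Multiplicative ℤ)) := by
    rw [IsDedekindDomain.HeightOneSpectrum.valuation_of_mk']
    rw [P.intValuation_if_neg hx, P.intValuation_if_neg (nonZeroDivisors.coe_ne_zero y),
      ← WithZero.exp_sub, neg_sub_neg]
    rfl
  rw [padicAbs, dif_neg hα]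
  congr 1
  rw [toAdd_unzero_eq _ hval, toAdd_ofAdd]

lemma cnt_support (x : 𝓞 K) (hx : x ≠ 0) :
    (Function.mulSupport fun P : HeightOneSpectrum (𝓞 K) =>
      (absNorm P.asIdeal : ℝ) ^ (cnt P x : ℤ)).Finite := by
  classical
  have hI : Ideal.span {x} ≠ 0 := by
    simpa [Ideal.span_singleton_eq_bot] using hx
  apply (Ideal.finite_factors hI).subset
  intro P hP
  simp only [Set.mem_setOf_eq]
  by_contra h
  have : cnt P x = 0 := by
    by_contra h0
    exact h ((Associates.count_ne_zero_iff_dvd hI P.irreducible).mp (by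
      simpa [cnt] using h0))
  apply hP
  simp [this]

lemma prodL (x : 𝓞 K) (hx : x ≠ 0) :
    (∏ᶠ P : HeightOneSpectrum (𝓞 K), (absNorm P.asIdeal : ℝ) ^ (cnt P x : ℤ)) =
      (absNorm (Ideal.span {x}) : ℝ) := by
  have hI : Ideal.span {x} ≠ 0 := by
    simpa [Ideal.span_singleton_eq_bot] using hx
  set g : Ideal (𝓞 K) →* ℝ :=
    (Nat.castRingHom ℝ).toMonoidHom.comp (Ideal.absNorm (S := 𝓞 K)).toMonoidHom with hg
  have key : g (∏ᶠ P : HeightOneSpectrum (𝓞 K), P.maxPowDividing (Ideal.span {x})) =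
      ∏ᶠ P : HeightOneSpectrum (𝓞 K), g (P.maxPowDividing (Ideal.span {x})) := by
    apply g.map_finprod_plift
    rw [Function.HasFiniteMulSupport, Function.mulSupport_comp_eq_preimage]
    exact (Ideal.finite_mulSupport hI).preimage (Set.injOn_of_injective PLift.down_injective)
  rw [Ideal.finprod_heightOneSpectrum_factorization hI] at key
  have : (absNorm (Ideal.span {x}) : ℝ) = g (Ideal.span {x}) := rfl
  rw [this, key]
  apply finprod_congr
  intro P
  rw [IsDedekindDomain.HeightOneSpectrum.maxPowDividing, map_pow, zpow_natCast]
  rfl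

lemma finprod_padicAbs_mk (x : 𝓞 K) (y : (𝓞 K)⁰) (hx : x ≠ 0) :
    (∏ᶠ P : HeightOneSpectrum (𝓞 K), padicAbs P (IsLocalization.mk' K x y)) =
      (absNorm (Ideal.span {(y : 𝓞 K)}) : ℝ) / (absNorm (Ideal.span {x}) : ℝ) := by
  have hy : (y : 𝓞 K) ≠ 0 := nonZeroDivisors.coe_ne_zero y
  have step : ∀ P : HeightOneSpectrum (𝓞 K), padicAbs P (IsLocalization.mk' K x y) =
      ((absNorm P.asIdeal : ℝ) ^ (cnt P (y : 𝓞 K) : ℤ)) *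
        ((absNorm P.asIdeal : ℝ) ^ (cnt P x : ℤ))⁻¹ := by
    intro P
    rw [padicAbs_mk P x y hx, zpow_sub₀ (normPos P).ne', div_eq_mul_inv]
  have hinvsupp : (Function.mulSupport fun P : HeightOneSpectrum (𝓞 K) =>
      ((absNorm P.asIdeal : ℝ) ^ (cnt P x : ℤ))⁻¹).Finite := by
    apply (cnt_support x hx).subset
    intro P hP
    rw [Function.mem_mulSupport] at hP ⊢
    intro h
    exact hP (by rw [h, inv_one])
  rw [finprod_congr step, finprod_mul_distrib (cnt_support _ hy) hinvsupp,
    finprod_inv_distrib, prodL _ hy, prodL _ hx, div_eq_mul_inv]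

lemma abs_norm_eq (x : 𝓞 K) :
    |((Algebra.norm ℚ ((x : K)) : ℚ) : ℝ)| = (absNorm (Ideal.span {x}) : ℝ) := by
  rw [← Algebra.coe_norm_int, Ideal.absNorm_span_singleton]
  push_cast [Nat.cast_natAbs]
  norm_cast


variable (K)

/-- **Product formula**: for a nonzero element `α` of a number field `K`,
`∏_P |α|_P * ∏_w (w α)^(m_w) = 1`, the first product over the nonzero prime ideals of `𝓞 K`
and the second over the infinite places of `K`. -/
theorem product_formula (α : K) (hα : α ≠ 0) :
    (∏ᶠ P : HeightOneSpectrum (𝓞 K), padicAbs P α) *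
      ∏ w : InfinitePlace K, (w α) ^ w.mult = 1 := by
  obtain ⟨⟨x, y⟩, hxy⟩ := IsLocalization.mk'_surjective (𝓞 K)⁰ α
  dsimp only at hxy
  subst hxy
  have hx : x ≠ 0 := by
    rintro rfl
    exact hα (IsLocalization.mk'_zero _)
  have hy : (y : 𝓞 K) ≠ 0 := nonZeroDivisors.coe_ne_zero y
  have hinf : ∏ w : InfinitePlace K, (w (IsLocalization.mk' K x y)) ^ w.mult =
      |((Algebra.norm ℚ (IsLocalization.mk' K x y) : ℚ) : ℝ)| := by
    rw [InfinitePlace.prod_eq_abs_norm, Rat.cast_abs]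
  have hnorm : ((y : 𝓞 K) : K) * IsLocalization.mk' K x y = ((x : 𝓞 K) : K) :=
    IsLocalization.mk'_spec' K x y
  have hN : |((Algebra.norm ℚ ((y : 𝓞 K) : K) : ℚ) : ℝ)| *
      |((Algebra.norm ℚ (IsLocalization.mk' K x y) : ℚ) : ℝ)| =
      |((Algebra.norm ℚ ((x : 𝓞 K) : K) : ℚ) : ℝ)| := by
    rw [← abs_mul, ← Rat.cast_mul, ← MonoidHom.map_mul, hnorm]
  rw [finprod_padicAbs_mk x y hx, hinf]
  rw [abs_norm_eq, abs_norm_eq] at hN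
  have h1 : (0 : ℝ) < (absNorm (Ideal.span {x}) : ℝ) := by
    have : absNorm (Ideal.span {x}) ≠ 0 := by
      rw [Ne, Ideal.absNorm_eq_zero_iff]
      simpa [Ideal.span_singleton_eq_bot] using hx
    exact_mod_cast Nat.pos_of_ne_zero this
  have h2 : (0 : ℝ) < (absNorm (Ideal.span {(y : 𝓞 K)}) : ℝ) := by
    have : absNorm (Ideal.span {(y : 𝓞 K)}) ≠ 0 := by
      rw [Ne, Ideal.absNorm_eq_zero_iff]
      simpa [Ideal.span_singleton_eq_bot] using hy
    exact_mod_cast Nat.pos_of_ne_zero this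
  have h3 : |((Algebra.norm ℚ (IsLocalization.mk' K x y) : ℚ) : ℝ)| =
      (absNorm (Ideal.span {x}) : ℝ) / (absNorm (Ideal.span {(y : 𝓞 K)}) : ℝ) := by
    rw [eq_div_iff h2.ne']
    linarith [hN]
  rw [h3, div_mul_div_comm, mul_comm]
  exact div_self (by positivity)
end
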